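/- For an asymmetric partial edge drawing of a segment s(u) whose vertex u in the intersection graph has degree δ_u, any maximum-ink PED can be assumed to choose the two stub lengths of s(u) from a set of at most (δ_u + 1)^2 combinations, namely pairs (ℓ_i^L(u), ℓ_j^R(u)) of candidate left and right stub lengths each induced by crossing points or the full half. -/
import Mathlib


open scoped Classical

/-- For an asymmetric partial edge drawing (PED), any maximum-ink PED can be
assumed to choose, for each segment `s(u)` of degree `δ u` in the intersection graph, its
two stub lengths from a set of at most `(δ u + 1)²` combinations: pairs of candidate left
and right stub lengths, each induced by a crossing point or drawing up to the far endpoint.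

Model: `len u` is the length of segment `u`, `cross` the crossing relation, and `pos u v`
the distance from the left endpoint of `u` to the crossing point with `v`.  A PED assigns
a left stub length `a u` and a right stub length `b u` (each in `(0, len u]`; together
they may cover the whole segment, in which case the segment is fully drawn and its drawn
length is `len u`, so the ink of `u` is `min (a u + b u) (len u)`).  The drawn part of `u`
covers a crossing at position `p` iff `p < a u` or `len u − p < b u`; validity requires
that for no crossing pair both segments cover the crossing point.  The candidate left stub
lengths of `u` are the crossing positions together with `len u`, and symmetrically for the
right side; each candidate set has at most `δ u + 1` elements. -/
theorem stmt_13 {V : Type*} [Fintype V] [DecidableEq V]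
    (len : V → ℝ) (cross : V → V → Prop) [DecidableRel cross]
    (pos : V → V → ℝ)
    (cross_symm : ∀ u v, cross u v → cross v u)
    (cross_irrefl : ∀ u, ¬ cross u u)
    (hlen : ∀ u, 0 < len u)
    (hpos : ∀ u v, cross u v → 0 < pos u v ∧ pos u v < len u)
    (δ : V → ℕ) (hδ : ∀ u, δ u = (Finset.univ.filter fun v => cross u v).card)
    (LeftCand RightCand : V → Finset ℝ)
    (hL : ∀ u, LeftCand u =
      insert (len u) ((Finset.univ.filter fun v => cross u v).image (pos u)))
    (hR : ∀ u, RightCand u =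
      insert (len u) ((Finset.univ.filter fun v => cross u v).image fun v => len u - pos u v))
    (valid : (V → ℝ) → (V → ℝ) → Prop)
    (hvalid : ∀ a b, valid a b ↔
      ((∀ u, 0 < a u ∧ a u ≤ len u ∧ 0 < b u ∧ b u ≤ len u) ∧
        ∀ u v, cross u v →
          ¬ ((pos u v < a u ∨ len u - pos u v < b u) ∧
             (pos v u < a v ∨ len v - pos v u < b v))))
    (ink : (V → ℝ) → (V → ℝ) → ℝ)
    (hink : ∀ a b, ink a b = ∑ u, min (a u + b u) (len u)) :
    (∀ u, ((LeftCand u) ×ˢ (RightCand u)).card ≤ (δ u + 1) ^ 2) ∧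
    (∀ a b, valid a b → ∃ a' b', valid a' b' ∧ ink a b ≤ ink a' b' ∧
      ∀ u, (a' u, b' u) ∈ (LeftCand u) ×ˢ (RightCand u)) := by
  constructor
  · intro u
    rw [Finset.card_product, sq]
    have h1 : (LeftCand u).card ≤ δ u + 1 := by
      rw [hL u, hδ u]
      exact le_trans (Finset.card_insert_le _ _)
        (Nat.add_le_add_right Finset.card_image_le 1)
    have h2 : (RightCand u).card ≤ δ u + 1 := by
      rw [hR u, hδ u]
      exact le_trans (Finset.card_insert_le _ _)
        (Nat.add_le_add_right Finset.card_image_le 1)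
    exact Nat.mul_le_mul h1 h2
  · intro a b hab
    rw [hvalid] at hab
    obtain ⟨hbnd, hcr⟩ := hab
    have hLne : ∀ u, ((LeftCand u).filter (fun x => a u ≤ x)).Nonempty := fun u =>
      ⟨len u, Finset.mem_filter.mpr ⟨by rw [hL u]; exact Finset.mem_insert_self _ _,
        (hbnd u).2.1⟩⟩
    have hRne : ∀ u, ((RightCand u).filter (fun x => b u ≤ x)).Nonempty := fun u =>
      ⟨len u, Finset.mem_filter.mpr ⟨by rw [hR u]; exact Finset.mem_insert_self _ _,
        (hbnd u).2.2.2⟩⟩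
    set a' : V → ℝ := fun u => ((LeftCand u).filter (fun x => a u ≤ x)).min' (hLne u) with ha'
    set b' : V → ℝ := fun u => ((RightCand u).filter (fun x => b u ≤ x)).min' (hRne u) with hb'
    have haa' : ∀ u, a u ≤ a' u := fun u =>
      (Finset.mem_filter.mp (Finset.min'_mem _ (hLne u))).2
    have hbb' : ∀ u, b u ≤ b' u := fun u =>
      (Finset.mem_filter.mp (Finset.min'_mem _ (hRne u))).2
    have ha'mem : ∀ u, a' u ∈ LeftCand u := fun u =>
      (Finset.mem_filter.mp (Finset.min'_mem _ (hLne u))).1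
    have hb'mem : ∀ u, b' u ∈ RightCand u := fun u =>
      (Finset.mem_filter.mp (Finset.min'_mem _ (hRne u))).1
    have ha'le : ∀ u, a' u ≤ len u := fun u =>
      Finset.min'_le _ _ (Finset.mem_filter.mpr
        ⟨by rw [hL u]; exact Finset.mem_insert_self _ _, (hbnd u).2.1⟩)
    have hb'le : ∀ u, b' u ≤ len u := fun u =>
      Finset.min'_le _ _ (Finset.mem_filter.mpr
        ⟨by rw [hR u]; exact Finset.mem_insert_self _ _, (hbnd u).2.2.2⟩)
    have hroundL : ∀ u p, p ∈ LeftCand u → p < a' u → p < a u := by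
      intro u p hp hlt
      by_contra h
      push_neg at h
      exact absurd (Finset.min'_le _ _ (Finset.mem_filter.mpr ⟨hp, h⟩)) (not_le.mpr hlt)
    have hroundR : ∀ u p, p ∈ RightCand u → p < b' u → p < b u := by
      intro u p hp hlt
      by_contra h
      push_neg at h
      exact absurd (Finset.min'_le _ _ (Finset.mem_filter.mpr ⟨hp, h⟩)) (not_le.mpr hlt)
    have hposmemL : ∀ u v, cross u v → pos u v ∈ LeftCand u := by
      intro u v hc
      rw [hL u]
      exact Finset.mem_insert_of_mem (Finset.mem_image.mpr
        ⟨v, Finset.mem_filter.mpr ⟨Finset.mem_univ _, hc⟩, rfl⟩)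
    have hposmemR : ∀ u v, cross u v → len u - pos u v ∈ RightCand u := by
      intro u v hc
      rw [hR u]
      exact Finset.mem_insert_of_mem (Finset.mem_image.mpr
        ⟨v, Finset.mem_filter.mpr ⟨Finset.mem_univ _, hc⟩, rfl⟩)
    refine ⟨a', b', ?_, ?_, ?_⟩
    · rw [hvalid]
      refine ⟨fun u => ⟨lt_of_lt_of_le (hbnd u).1 (haa' u), ha'le u,
        lt_of_lt_of_le (hbnd u).2.2.1 (hbb' u), hb'le u⟩, ?_⟩
      intro u v hc hcon
      apply hcr u v hc
      obtain ⟨h1, h2⟩ := hcon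
      refine ⟨?_, ?_⟩
      · rcases h1 with h | h
        · exact Or.inl (hroundL u _ (hposmemL u v hc) h)
        · exact Or.inr (hroundR u _ (hposmemR u v hc) h)
      · rcases h2 with h | h
        · exact Or.inl (hroundL v _ (hposmemL v u (cross_symm u v hc)) h)
        · exact Or.inr (hroundR v _ (hposmemR v u (cross_symm u v hc)) h)
    · rw [hink, hink]
      exact Finset.sum_le_sum fun u _ =>
        min_le_min (add_le_add (haa' u) (hbb' u)) le_rfl
    · intro u
      exact Finset.mem_product.mpr ⟨ha'mem u, hb'mem u⟩
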